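/- Let L be a field of characteristic p containing 𝔽q, and let v be a discrete additive valuation on L, i.e., a map v : L → ℤ ∪ {∞} with v(x) = ∞ iff x = 0, v(xy) = v(x) + v(y), and v(x + y) ≥ min(v(x), v(y)). For h ∈ L[t] set ord_v(h) := min over the coefficients c of h of v(c) (with ord_v(0) = ∞). Let θ, κ₁, …, κ_r ∈ L with κ_r ≠ 0 (r ≥ 1), let P₁, …, P_ℓ ∈ L be nonzero, let a₁, …, a_ℓ ∈ 𝔽q[t], and set F := Σ_{i=1}^ℓ P_i·ā_i ∈ L[t], where ā_i is the coefficientwise image of a_i in L[t]. Define C_v := min of the following integers: min_{1 ≤ i ≤ ℓ} v(P_i); ⌊(v(κ_j) − v(κ_r))/(q^r − q^j)⌋ for each 1 ≤ j ≤ r − 1 with κ_j ≠ 0; and ⌊(min(0, v(θ)) − v(κ_r))/(q^r − 1)⌋. If g ∈ L[t] satisfies (t − θ)·g + F = κ_r·g^{(r)} + ⋯ + κ₁·g^{(1)} in L[t], then ord_v(F) ≥ C_v and ord_v(g) ≥ C_v. -/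

import Mathlib

/-- The `j`-th Frobenius twist of a polynomial: raise each coefficient to the
`q^j`-th power. -/
noncomputable def frobTwist {L : Type*} [Semiring L] (q j : ℕ) (g : Polynomial L) :
    Polynomial L :=
  g.sum fun n c => Polynomial.monomial n (c ^ q ^ j)

/-- `ord_v` of a polynomial: the minimum of `v` over its coefficients (with
`ord_v(0) = ∞`). -/
noncomputable def ordPoly {L : Type*} [Semiring L] (v : L → WithTop ℤ)
    (h : Polynomial L) : WithTop ℤ :=
  h.support.inf fun n => v (h.coeff n)

section Helpers
variable {L : Type*} [Field L] (v : L → WithTop ℤ)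
  (hv0 : ∀ x : L, v x = ⊤ ↔ x = 0)
  (hvmul : ∀ x y : L, v (x * y) = v x + v y)
  (hvadd : ∀ x y : L, min (v x) (v y) ≤ v (x + y))

include hv0 hvmul in
lemma v_one' : v 1 = 0 := by
  have h := hvmul 1 1
  rw [one_mul] at h
  have h1 : v 1 ≠ ⊤ := by simp [hv0]
  rcases (WithTop.ne_top_iff_exists.1 h1) with ⟨a, ha⟩
  rw [← ha] at h ⊢
  norm_cast at h ⊢
  omega

include hv0 hvmul in
lemma v_neg' (x : L) : v (-x) = v x := by
  have hm1 : v (-1 : L) = 0 := by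
    have h := hvmul (-1) (-1)
    rw [neg_mul_neg, one_mul, v_one' v hv0 hvmul] at h
    have h1 : v (-1 : L) ≠ ⊤ := by simp [hv0]
    rcases (WithTop.ne_top_iff_exists.1 h1) with ⟨a, ha⟩
    rw [← ha] at h ⊢
    norm_cast at h ⊢
    omega
  have := hvmul (-1) x
  rw [neg_one_mul, hm1, zero_add] at this
  exact this

include hv0 hvmul in
lemma v_pow' (x : L) (wx : ℤ) (hwx : v x = (wx : WithTop ℤ)) (n : ℕ) :
    v (x ^ n) = ((n * wx : ℤ) : WithTop ℤ) := by
  induction n with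
  | zero => simpa using v_one' v hv0 hvmul
  | succ k ih =>
      rw [pow_succ, hvmul, ih, hwx, ← WithTop.coe_add]
      congr 1
      push_cast
      ring

include hv0 hvadd in
lemma v_sum_le' {ι : Type*} (s : Finset ι) (f : ι → L) (B : WithTop ℤ)
    (hf : ∀ i ∈ s, B ≤ v (f i)) : B ≤ v (∑ i ∈ s, f i) := by
  classical
  induction s using Finset.induction_on with
  | empty => simp [(hv0 0).2 rfl]
  | @insert a s' hni ih =>
      rw [Finset.sum_insert hni]
      refine le_trans ?_ (hvadd _ _)
      exact le_min (hf a (Finset.mem_insert_self _ _))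
        (ih fun i hi => hf i (Finset.mem_insert_of_mem hi))

include hv0 hvadd in
lemma v_sum_lt' {ι : Type*} (s : Finset ι) (f : ι → L) (B : WithTop ℤ) (hB : B ≠ ⊤)
    (hf : ∀ i ∈ s, B < v (f i)) : B < v (∑ i ∈ s, f i) := by
  classical
  induction s using Finset.induction_on with
  | empty => simp [(hv0 0).2 rfl, lt_top_iff_ne_top, hB]
  | @insert a s' hni ih =>
      rw [Finset.sum_insert hni]
      refine lt_of_lt_of_le ?_ (hvadd _ _)
      exact lt_min (hf a (Finset.mem_insert_self _ _))
        (ih fun i hi => hf i (Finset.mem_insert_of_mem hi))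

include hv0 hvmul hvadd in
lemma v_add_eq' (x y : L) (h : v x < v y) : v (x + y) = v x := by
  have h1 : v x ≤ v (x + y) := le_trans (le_min le_rfl h.le) (hvadd x y)
  have h2 : v (x + y) ≤ v x := by
    have := hvadd (x + y) (-y)
    rw [add_neg_cancel_right, v_neg' v hv0 hvmul] at this
    rcases le_or_gt (v (x+y)) (v x) with h' | h'
    · exact h'
    · exact absurd this (not_le.2 (lt_min h' h))
  exact le_antisymm h2 h1

include hv0 in
lemma ordPoly_le_coeff (h : Polynomial L) (n : ℕ) :
    ordPoly v h ≤ v (h.coeff n) := by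
  by_cases hn : n ∈ h.support
  · exact Finset.inf_le hn
  · rw [Polynomial.notMem_support_iff.1 hn, (hv0 0).2 rfl]
    exact le_top

include hv0 hvmul hvadd in
lemma v_mul_coeff' (h1 h2 : Polynomial L) (n : ℕ) :
    ordPoly v h1 + ordPoly v h2 ≤ v ((h1 * h2).coeff n) := by
  rw [Polynomial.coeff_mul]
  refine v_sum_le' v hv0 hvadd _ _ _ (fun pr _ => ?_)
  rw [hvmul]
  exact add_le_add (ordPoly_le_coeff v hv0 h1 pr.1) (ordPoly_le_coeff v hv0 h2 pr.2)

lemma frobTwist_coeff {q j : ℕ} (hQ : q ^ j ≠ 0)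
    (g : Polynomial L) (n : ℕ) : (frobTwist q j g).coeff n = (g.coeff n) ^ q ^ j := by
  classical
  unfold frobTwist
  rw [Polynomial.sum_def, Polynomial.finset_sum_coeff]
  simp only [Polynomial.coeff_monomial]
  by_cases hn : n ∈ g.support
  · rw [Finset.sum_eq_single n (fun b _ hb => by simp [hb]) (fun h => absurd hn h)]
    simp
  · rw [Finset.sum_eq_zero (fun b hb => by
      simp only [ite_eq_right_iff]
      intro hbn; exact absurd (hbn ▸ hb) hn)]
    rw [Polynomial.notMem_support_iff.1 hn, zero_pow hQ]
end Helpers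

/-- Local valuation bound from the proof of Theorem 3.2 of the paper. Let `v` be
a discrete additive valuation on a field `L ⊇ 𝔽q` of characteristic `p` (with
integer value `w x` on every nonzero `x`). With
`C_v := min { min_i v(P_i), ⌊(v(κ_j) − v(κ_r))/(q^r − q^j)⌋ (1 ≤ j ≤ r−1, κ_j ≠ 0),
⌊(min(0, v(θ)) − v(κ_r))/(q^r − 1)⌋ }`, any solution `g ∈ L[t]` of
`(t − θ)g + F = κ_r g^{(r)} + ⋯ + κ₁ g^{(1)}` with `F = Σ P_i·ā_i` satisfies
`ord_v(F) ≥ C_v` and `ord_v(g) ≥ C_v`. -/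
theorem difference_equation_valuation_bound
    (p : ℕ) [Fact p.Prime] (e q : ℕ) (he : 0 < e) (hq : q = p ^ e)
    (Fq : Type*) [Field Fq] [Fintype Fq] (hcard : Fintype.card Fq = q)
    (L : Type*) [Field L] [DecidableEq L] (ι : Fq →+* L)
    (v : L → WithTop ℤ) (w : L → ℤ)
    (hv0 : ∀ x : L, v x = ⊤ ↔ x = 0)
    (hvw : ∀ x : L, x ≠ 0 → v x = (w x : WithTop ℤ))
    (hvmul : ∀ x y : L, v (x * y) = v x + v y)
    (hvadd : ∀ x y : L, min (v x) (v y) ≤ v (x + y))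
    (θ : L) (r : ℕ) (hr : 1 ≤ r) (κ : ℕ → L) (hκr : κ r ≠ 0)
    (ℓ : ℕ) (P : Fin ℓ → L) (hP : ∀ i, P i ≠ 0)
    (a : Fin ℓ → Polynomial Fq)
    (F : Polynomial L)
    (hF : F = ∑ i, Polynomial.C (P i) * (a i).map ι)
    (g : Polynomial L)
    (hg : (Polynomial.X - Polynomial.C θ) * g + F =
      ∑ j ∈ Finset.Icc 1 r, Polynomial.C (κ j) * frobTwist q j g) :
    min (Finset.univ.inf fun i : Fin ℓ => ((w (P i) : ℤ) : WithTop ℤ))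
        (min
          (((Finset.Icc 1 (r - 1)).filter fun j => κ j ≠ 0).inf fun j =>
            ((Int.fdiv (w (κ j) - w (κ r)) ((q : ℤ) ^ r - (q : ℤ) ^ j) : ℤ) : WithTop ℤ))
          ((Int.fdiv ((if θ = 0 then 0 else min 0 (w θ)) - w (κ r))
              ((q : ℤ) ^ r - 1) : ℤ) : WithTop ℤ))
      ≤ ordPoly v F ∧
    min (Finset.univ.inf fun i : Fin ℓ => ((w (P i) : ℤ) : WithTop ℤ))
        (min
          (((Finset.Icc 1 (r - 1)).filter fun j => κ j ≠ 0).inf fun j =>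
            ((Int.fdiv (w (κ j) - w (κ r)) ((q : ℤ) ^ r - (q : ℤ) ^ j) : ℤ) : WithTop ℤ))
          ((Int.fdiv ((if θ = 0 then 0 else min 0 (w θ)) - w (κ r))
              ((q : ℤ) ^ r - 1) : ℤ) : WithTop ℤ))
      ≤ ordPoly v g := by
  classical
  -- basic numeric facts
  have hq2 : 2 ≤ q := by
    have hp2 : 2 ≤ p := (Fact.out : p.Prime).two_le
    have : p ^ 1 ≤ p ^ e := Nat.pow_le_pow_right (by omega) he
    rw [pow_one] at this
    omega
  have hqr1 : (1 : ℤ) < (q : ℤ) ^ r := one_lt_pow₀ (by exact_mod_cast hq2 : (1:ℤ) < (q:ℤ)) (by omega)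
  set infP := Finset.univ.inf fun i : Fin ℓ => ((w (P i) : ℤ) : WithTop ℤ) with hinfP
  set minθ : ℤ := if θ = 0 then 0 else min 0 (w θ) with hminθ
  set Dj := ((Finset.Icc 1 (r - 1)).filter fun j => κ j ≠ 0).inf fun j =>
      ((Int.fdiv (w (κ j) - w (κ r)) ((q : ℤ) ^ r - (q : ℤ) ^ j) : ℤ) : WithTop ℤ) with hDj
  set D3 : ℤ := Int.fdiv (minθ - w (κ r)) ((q : ℤ) ^ r - 1) with hD3
  have hminθ0 : minθ ≤ 0 := by rw [hminθ]; split <;> simp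
  -- valuation of nonzero constants from Fq is 0
  have hι : ∀ c : Fq, c ≠ 0 → v (ι c) = 0 := by
    intro c hc
    have hιc : (ι c) ≠ 0 := by simpa using hc
    have hpow : (ι c) ^ (q - 1) = 1 := by
      rw [← map_pow, ← map_one ι]
      congr 1
      rw [← hcard]
      exact FiniteField.pow_card_sub_one_eq_one c hc
    have h1 := v_pow' v hv0 hvmul (ι c) (w (ι c)) (hvw _ hιc) (q - 1)
    rw [hpow, v_one' v hv0 hvmul] at h1
    have h2 : ((q - 1 : ℕ) : ℤ) * w (ι c) = 0 := by exact_mod_cast h1.symm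
    have hw0 : w (ι c) = 0 := by
      have hq1 : ((q - 1 : ℕ) : ℤ) ≠ 0 := by
        have : 1 ≤ q - 1 := by omega
        exact_mod_cast (by omega : q - 1 ≠ 0)
      exact (mul_eq_zero.1 h2).resolve_left hq1
    rw [hvw _ hιc, hw0]; rfl
  have hFcoeff : ∀ n, F.coeff n = ∑ i, P i * ι ((a i).coeff n) := by
    intro n
    rw [hF, Polynomial.finset_sum_coeff]
    refine Finset.sum_congr rfl fun i _ => ?_
    rw [Polynomial.coeff_C_mul, Polynomial.coeff_map]
  have hFbound : ∀ n, infP ≤ v (F.coeff n) := by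
    intro n
    rw [hFcoeff n]
    refine v_sum_le' v hv0 hvadd _ _ _ fun i _ => ?_
    by_cases hc : (a i).coeff n = 0
    · rw [hc, map_zero, mul_zero, (hv0 0).2 rfl]; exact le_top
    · rw [hvmul, hι _ hc, add_zero, hvw _ (hP i)]
      exact Finset.inf_le (Finset.mem_univ i)
  constructor
  · refine le_trans (min_le_left _ _) ?_
    unfold ordPoly
    exact Finset.le_inf fun n _ => hFbound n
  · by_contra hcon
    rw [not_le] at hcon
    have hg0 : g ≠ 0 := by
      intro h0
      rw [h0] at hcon
      have htop : ordPoly v (0 : Polynomial L) = ⊤ := by simp [ordPoly]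
      rw [htop] at hcon
      exact not_top_lt hcon
    obtain ⟨n0, hn0, heq⟩ := Finset.exists_mem_eq_inf g.support
      (Polynomial.nonempty_support_iff.2 hg0) (fun n => v (g.coeff n))
    set c0 := g.coeff n0 with hc0def
    have hc0 : c0 ≠ 0 := Polynomial.mem_support_iff.1 hn0
    set m := w c0 with hm
    have hvc0 : v c0 = (m : WithTop ℤ) := hvw _ hc0
    have hordg : ordPoly v g = (m : WithTop ℤ) := by
      unfold ordPoly; rw [heq]; exact hvc0
    rw [hordg] at hcon
    -- extract the integer bounds
    have hmP : ∀ i : Fin ℓ, m < w (P i) := fun i => by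
      have h := lt_of_lt_of_le hcon
        (le_trans (min_le_left _ _) (Finset.inf_le (Finset.mem_univ i)))
      exact_mod_cast h
    have hmj : ∀ j, 1 ≤ j → j ≤ r - 1 → κ j ≠ 0 →
        m < Int.fdiv (w (κ j) - w (κ r)) ((q:ℤ)^r - (q:ℤ)^j) := by
      intro j h1 h2 h3
      have hmem : j ∈ (Finset.Icc 1 (r-1)).filter fun j => κ j ≠ 0 :=
        Finset.mem_filter.2 ⟨Finset.mem_Icc.2 ⟨h1, h2⟩, h3⟩
      have h := lt_of_lt_of_le hcon (le_trans (min_le_right _ _)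
        (le_trans (min_le_left _ _) (Finset.inf_le hmem)))
      exact_mod_cast h
    have hm3 : m < D3 := by
      have h := lt_of_lt_of_le hcon (le_trans (min_le_right _ _) (min_le_right _ _))
      exact_mod_cast h
    have hB3 : (0:ℤ) < (q:ℤ)^r - 1 := by linarith
    have key3 : m * ((q:ℤ)^r - 1) < minθ - w (κ r) := by
      have h1 : m + 1 ≤ D3 := hm3
      rw [hD3, Int.fdiv_eq_ediv_of_nonneg _ hB3.le] at h1
      have h2 := (Int.le_ediv_iff_mul_le hB3).1 h1
      nlinarith
    have keyj : ∀ j, 1 ≤ j → j ≤ r - 1 → κ j ≠ 0 →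
        m * ((q:ℤ)^r - (q:ℤ)^j) < w (κ j) - w (κ r) := by
      intro j h1 h2 h3
      have hBj : (0:ℤ) < (q:ℤ)^r - (q:ℤ)^j := by
        have hlt : (q:ℤ)^j < (q:ℤ)^r :=
          pow_lt_pow_right₀ (by exact_mod_cast hq2 : (1:ℤ) < (q:ℤ)) (by omega)
        linarith
      have h4 : m + 1 ≤ Int.fdiv (w (κ j) - w (κ r)) ((q:ℤ)^r - (q:ℤ)^j) := hmj j h1 h2 h3
      rw [Int.fdiv_eq_ediv_of_nonneg _ hBj.le] at h4
      have h5 := (Int.le_ediv_iff_mul_le hBj).1 h4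
      nlinarith
    have hSm : w (κ r) + (q:ℤ)^r * m < m := by nlinarith
    have hSθ : w (κ r) + (q:ℤ)^r * m < minθ + m := by nlinarith
    -- valuation of powers of c0
    have hvpow : ∀ j : ℕ, v (c0 ^ q ^ j) = (((q:ℤ)^j * m : ℤ) : WithTop ℤ) := by
      intro j
      rw [v_pow' v hv0 hvmul c0 m hvc0 (q ^ j)]
      congr 1
    have hterm : ∀ j : ℕ, (Polynomial.C (κ j) * frobTwist q j g).coeff n0
        = κ j * c0 ^ q ^ j := by
      intro j
      rw [Polynomial.coeff_C_mul, frobTwist_coeff (pow_ne_zero j (by omega : q ≠ 0))]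
    have hvr : v (κ r * c0 ^ q ^ r) = ((w (κ r) + (q:ℤ)^r * m : ℤ) : WithTop ℤ) := by
      rw [hvmul, hvpow r, hvw _ hκr, ← WithTop.coe_add]
    -- RHS coefficient at n0 has valuation exactly w(κ r) + q^r m
    have hRHSn0 : v ((∑ j ∈ Finset.Icc 1 r, Polynomial.C (κ j) * frobTwist q j g).coeff n0)
        = ((w (κ r) + (q:ℤ)^r * m : ℤ) : WithTop ℤ) := by
      rw [Polynomial.finset_sum_coeff, Finset.sum_congr rfl fun j _ => hterm j,
        ← Finset.add_sum_erase _ _ (Finset.mem_Icc.2 ⟨hr, le_refl r⟩)]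
      rw [v_add_eq' v hv0 hvmul hvadd _ _ ?_]
      · exact hvr
      · rw [hvr]
        refine v_sum_lt' v hv0 hvadd _ _ _ WithTop.coe_ne_top fun j hj => ?_
        obtain ⟨hjne, hjmem⟩ := Finset.mem_erase.1 hj
        obtain ⟨hj1, hjr⟩ := Finset.mem_Icc.1 hjmem
        by_cases hκj : κ j = 0
        · rw [hκj, zero_mul, (hv0 0).2 rfl]
          exact WithTop.coe_lt_top _
        · rw [hvmul, hvpow j, hvw _ hκj, ← WithTop.coe_add, WithTop.coe_lt_coe]
          have h6 := keyj j hj1 (by omega) hκj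
          nlinarith
    -- ord of X - C θ
    have hordXθ : ((minθ : ℤ) : WithTop ℤ) ≤ ordPoly v (Polynomial.X - Polynomial.C θ) := by
      refine Finset.le_inf fun n _ => ?_
      rcases n with (_|_|k)
      · have h1 : (Polynomial.X - Polynomial.C θ).coeff 0 = -θ := by
          simp
        rw [h1, v_neg' v hv0 hvmul]
        by_cases hθ : θ = 0
        · rw [hθ, (hv0 0).2 rfl]; exact le_top
        · rw [hvw _ hθ, hminθ, if_neg hθ, WithTop.coe_le_coe]; exact min_le_right _ _
      · have h1 : (Polynomial.X - Polynomial.C θ).coeff 1 = 1 := by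
          simp [Polynomial.coeff_C]
        rw [h1, v_one' v hv0 hvmul]
        exact_mod_cast hminθ0
      · have h1 : (Polynomial.X - Polynomial.C θ).coeff (k+2) = 0 := by
          simp [Polynomial.coeff_X, Polynomial.coeff_C]
        rw [h1, (hv0 0).2 rfl]; exact le_top
    have hLHS1 : ((minθ + m : ℤ) : WithTop ℤ)
        ≤ v (((Polynomial.X - Polynomial.C θ) * g).coeff n0) := by
      refine le_trans ?_ (v_mul_coeff' v hv0 hvmul hvadd _ _ n0)
      rw [hordg, WithTop.coe_add]
      exact add_le_add_left hordXθ _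
    -- LHS coefficient at n0 has valuation strictly bigger
    have hLHSlt : ((w (κ r) + (q:ℤ)^r * m : ℤ) : WithTop ℤ)
        < v ((((Polynomial.X - Polynomial.C θ) * g) + F).coeff n0) := by
      rw [Polynomial.coeff_add]
      refine lt_of_lt_of_le (lt_min ?_ ?_) (hvadd _ _)
      · exact lt_of_lt_of_le (WithTop.coe_lt_coe.2 hSθ) hLHS1
      · refine lt_of_lt_of_le ?_ (hFbound n0)
        refine lt_of_lt_of_le (WithTop.coe_lt_coe.2 (lt_add_one _)) ?_
        refine Finset.le_inf fun i _ => WithTop.coe_le_coe.2 ?_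
        have h7 := (hSm.trans (hmP i))
        omega
    rw [hg, hRHSn0] at hLHSlt
    exact lt_irrefl _ hLHSlt
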